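/- For G = G(m,n,k) with trivial centre, S ⊆ ℤ_m a base, and x, y ∈ ℤ_m: μ(x,y) ∈ Σ_G(S) if and only if the whole container C(x,y) = {μ(x,yz) : z ∈ ℤ_m} is contained in Σ_G(S). -/

import Mathlib

/-- `n = ind_m(k)`: `n` is the least positive integer with `k^n ≡ 1 (mod m)`. -/
def IsIndex (m k n : ℕ) : Prop :=
  0 < n ∧ k ^ n ≡ 1 [MOD m] ∧ ∀ d : ℕ, 0 < d → k ^ d ≡ 1 [MOD m] → n ≤ d

/-- The mu-map `μ(x,y)` of `G = G(m,n,k)`, acting on elements of `G` written in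
the normal form `a^i b^j` (identified with pairs `(i,j) ∈ ℤ_m × ℤ_n`):
`(a^i b^j) μ(x,y) = a^N` with `N ≡ x·i·k^j − y·(k^j − 1) (mod m)`. -/
def Mu (m n k : ℕ) (x y : ZMod m) : Function.End (ZMod m × ZMod n) :=
  fun p => (x * p.1 * (k : ZMod m) ^ p.2.val -
    y * ((k : ZMod m) ^ p.2.val - 1), 0)

/-- The container `C(x,y) = {μ(x, yz) : z ∈ ℤ_m}`. -/
def Container (m n k : ℕ) (x y : ZMod m) :
    Set (Function.End (ZMod m × ZMod n)) :=
  {f | ∃ z : ZMod m, f = Mu m n k x (y * z)}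
/-- The multiplicative closure `S*` of `S` in `ℤ_m`. -/
def mulClosure (m : ℕ) (S : Set (ZMod m)) : Set (ZMod m) :=
  Subsemigroup.closure S

/-- `S ⊆ ℤ_m` is a base if it contains `0` and at least one unit of `ℤ_m`. -/
def IsBase (m : ℕ) (S : Set (ZMod m)) : Prop :=
  (0 : ZMod m) ∈ S ∧ ∃ u ∈ S, IsUnit u

/-- The set `Γ_μ(S) = {μ(s,z) : s ∈ S, z ∈ ℤ_m}` of mu-generators. -/
def GammaMu (m n k : ℕ) (S : Set (ZMod m)) :
    Set (Function.End (ZMod m × ZMod n)) :=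
  {f | ∃ s ∈ S, ∃ z : ZMod m, f = Mu m n k s z}

/-- The set `Π_μ(S) = {μ(s·s*, s*·z) : s ∈ S, s* ∈ S*, z ∈ ℤ_m}` of
mu-products. -/
def PiMu (m n k : ℕ) (S : Set (ZMod m)) :
    Set (Function.End (ZMod m × ZMod n)) :=
  {f | ∃ s ∈ S, ∃ t ∈ mulClosure m S, ∃ z : ZMod m,
    f = Mu m n k (s * t) (t * z)}

/-- The `G`-semigroup `Σ_G(S)`: the subsemigroup of `M(G)` (under composition)
generated by `Γ_μ(S)`. -/
def SigmaG (m n k : ℕ) (S : Set (ZMod m)) :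
    Set (Function.End (ZMod m × ZMod n)) :=
  Subsemigroup.closure (GammaMu m n k S)

/-- Composition law for mu-maps: `μ(a,b) ∘ μ(c,d) = μ(ac, ad)`. -/
lemma mu_mul (m n k : ℕ) (hn : 0 < n) (a b c d : ZMod m) :
    Mu m n k a b * Mu m n k c d = Mu m n k (a * c) (a * d) := by
  haveI : NeZero n := ⟨hn.ne'⟩
  funext p
  show Mu m n k a b (Mu m n k c d p) = _
  simp only [Mu, ZMod.val_zero, pow_zero, sub_self, mul_zero, sub_zero, mul_one,
    Prod.mk.injEq]
  exact ⟨by ring, trivial⟩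

/-- Injectivity of the parametrisation of mu-maps. -/
lemma mu_inj {m n k : ℕ} (hm : 0 < m) (hk : 0 < k)
    (hcop : Nat.gcd m (k - 1) = 1) (hind : IsIndex m k n)
    {x y a b : ZMod m} (h : Mu m n k x y = Mu m n k a b) :
    x = a ∧ y = b := by
  haveI : NeZero m := ⟨hm.ne'⟩
  haveI : NeZero n := ⟨hind.1.ne'⟩
  rcases eq_or_lt_of_le (show 1 ≤ m from hm) with hm1 | hm2
  · have : m = 1 := hm1.symm
    subst this
    exact ⟨Subsingleton.elim _ _, Subsingleton.elim _ _⟩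
  · have hk2 : 2 ≤ k := by
      by_contra hlt
      have hk1 : k = 1 := by omega
      subst hk1
      simp [Nat.gcd_zero_right] at hcop
      omega
    have hn2 : 2 ≤ n := by
      by_contra hlt
      have hn0 := hind.1
      have hn1 : n = 1 := by omega
      have h1 : k ^ 1 ≡ 1 [MOD m] := hn1 ▸ hind.2.1
      rw [pow_one] at h1
      have hdvd : m ∣ k - 1 := (Nat.modEq_iff_dvd' (by omega)).mp h1.symm
      have := Nat.gcd_eq_left hdvd
      omega
    haveI : Fact (1 < n) := ⟨hn2⟩
    have hu : IsUnit ((k : ZMod m) - 1) := by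
      have hc : ((k - 1 : ℕ) : ZMod m) = (k : ZMod m) - 1 := by
        push_cast [Nat.cast_sub (by omega : 1 ≤ k)]; ring
      rw [← hc]
      exact (ZMod.isUnit_iff_coprime _ _).mpr (by rwa [Nat.Coprime, Nat.gcd_comm])
    constructor
    · have h1 := congrFun h ((1 : ZMod m), (0 : ZMod n))
      simpa [Mu, Prod.ext_iff] using h1
    · have h2 := congrFun h ((0 : ZMod m), (1 : ZMod n))
      simp [Mu, Prod.ext_iff, ZMod.val_one] at h2
      exact hu.mul_left_injective (by simpa using h2)

/-- Every element of `Σ_G(S)` is a mu-map, and all its "twists" also lie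
in `Σ_G(S)`. -/
lemma mem_twist (m n k : ℕ) (hn : 0 < n) (S : Set (ZMod m))
    {f : Function.End (ZMod m × ZMod n)} (hf : f ∈ SigmaG m n k S) :
    ∃ a b, f = Mu m n k a b ∧ ∀ z, Mu m n k a (b * z) ∈ SigmaG m n k S := by
  have hf' : f ∈ Subsemigroup.closure (GammaMu m n k S) := hf
  induction hf' using Subsemigroup.closure_induction with
  | mem g hg =>
    obtain ⟨s, hs, w, rfl⟩ := hg
    exact ⟨s, w, rfl, fun z =>
      Subsemigroup.subset_closure ⟨s, hs, w * z, rfl⟩⟩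
  | mul g h hg hh ihg ihh =>
    obtain ⟨a, b, rfl, ha⟩ := ihg hg
    obtain ⟨c, d, rfl, hc⟩ := ihh hh
    refine ⟨a * c, a * d, mu_mul m n k hn a b c d, fun z => ?_⟩
    have h1 : Mu m n k a b ∈ SigmaG m n k S := by
      have := ha 1; rwa [mul_one] at this
    have h2 : Mu m n k c (d * z) ∈ SigmaG m n k S := hc z
    have h3 : Mu m n k a b * Mu m n k c (d * z) ∈
        Subsemigroup.closure (GammaMu m n k S) := mul_mem h1 h2
    have h4 : Mu m n k a b * Mu m n k c (d * z) =
        Mu m n k (a * c) (a * d * z) := by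
      rw [mu_mul m n k hn a b c (d * z), mul_assoc]
    rwa [h4] at h3

/-- `μ(x,y) ∈ Σ_G(S)` iff the whole container
`C(x,y)` is contained in `Σ_G(S)`. -/
theorem stmt_14 (m n k : ℕ) (hm : 0 < m) (hk : 0 < k)
    (hcop : Nat.gcd m (k - 1) = 1) (hind : IsIndex m k n)
    (S : Set (ZMod m)) (hS : IsBase m S) (x y : ZMod m) :
    Mu m n k x y ∈ SigmaG m n k S ↔ Container m n k x y ⊆ SigmaG m n k S := by
  constructor
  · intro h f hf
    obtain ⟨z, rfl⟩ := hf
    obtain ⟨a, b, heq, hall⟩ := mem_twist m n k hind.1 S h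
    obtain ⟨hx, hy⟩ := mu_inj hm hk hcop hind heq
    rw [hx, hy]
    exact hall z
  · intro h
    have : Mu m n k x y ∈ Container m n k x y := ⟨1, by rw [mul_one]⟩
    exact h this
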